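/- Let G be a finite group acting linearly on a finite-dimensional vector space V over F ∈ {ℝ, ℂ}, and fix a natural number k and integer r ≥ 1. If there exist v₁, …, v_k ∈ V such that the span of Gv₁ ∪ ⋯ ∪ Gv_k has codimension less than r in V, then the set of tuples (v₁, …, v_k) ∈ V^k for which the span of Gv₁ ∪ ⋯ ∪ Gv_k has codimension less than r contains an open dense subset of V^k. -/

import Mathlib

open Module Submodule

open Module Submodule Polynomial

/-- Key polynomial lemma: if `a + b` is linearly independent, then `a + t • b` is
linearly independent for all but finitely many `t`. -/
lemma aux_finite_bad {𝕜 : Type*} [Field 𝕜] {V : Type*} [AddCommGroup V] [Module 𝕜 V]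
    {m : ℕ} {a b : Fin m → V} (h : LinearIndependent 𝕜 (fun j => a j + b j)) :
    {t : 𝕜 | ¬ LinearIndependent 𝕜 (fun j => a j + t • b j)}.Finite := by
  classical
  set c : Fin m → V := fun j => a j + b j with hc
  -- a left inverse linear map sending c to the standard basis
  set ℓ : (Fin m → 𝕜) →ₗ[𝕜] V := (Pi.basisFun 𝕜 (Fin m)).constr 𝕜 c with hℓ
  have hker : LinearMap.ker ℓ = ⊥ := by
    rw [LinearMap.ker_eq_bot']
    intro x hx
    have hx' : ∑ j, x j • c j = 0 := by
      have := (Pi.basisFun 𝕜 (Fin m)).constr_apply_fintype 𝕜 c x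
      simp only [Pi.basisFun_equivFun, LinearEquiv.refl_apply] at this
      rw [hℓ] at hx; rw [this] at hx; exact hx
    funext j
    exact Fintype.linearIndependent_iff.mp h (fun j => x j) hx' j
  obtain ⟨φ, hφ⟩ := ℓ.exists_leftInverse_of_injective hker
  have hφc : ∀ j, φ (c j) = Pi.single j 1 := by
    intro j
    have h1 : ℓ ((Pi.basisFun 𝕜 (Fin m)) j) = c j := (Pi.basisFun 𝕜 (Fin m)).constr_basis 𝕜 c j
    have h2 : φ (ℓ ((Pi.basisFun 𝕜 (Fin m)) j)) = (Pi.basisFun 𝕜 (Fin m)) j := by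
      rw [← LinearMap.comp_apply, hφ]; rfl
    rw [h1] at h2
    rw [h2, Pi.basisFun_apply]
  -- the determinant polynomial
  set P : 𝕜[X] :=
    (Matrix.of fun j i => C (φ (a j) i) + X * C (φ (b j) i) : Matrix (Fin m) (Fin m) 𝕜[X]).det
    with hP
  have hev : ∀ t : 𝕜, P.eval t =
      (Matrix.of fun j i => φ (a j + t • b j) i : Matrix (Fin m) (Fin m) 𝕜).det := by
    intro t
    have := RingHom.map_det (evalRingHom t)
      (Matrix.of fun j i => C (φ (a j) i) + X * C (φ (b j) i) : Matrix (Fin m) (Fin m) 𝕜[X])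
    rw [hP]
    rw [show P.eval t = (evalRingHom t) P from rfl] at *
    rw [this]
    congr 1
    ext j i
    simp [Matrix.map_apply, map_add, map_smul]
    ring
  have h1 : P.eval 1 ≠ 0 := by
    rw [hev 1]
    have : (Matrix.of fun j i => φ (a j + (1:𝕜) • b j) i : Matrix (Fin m) (Fin m) 𝕜) = 1 := by
      ext j i
      have := hφc j
      rw [hc] at this
      simp only [Matrix.of_apply, one_smul]
      rw [show φ (a j + b j) i = (Pi.single j 1 : Fin m → 𝕜) i from congrFun this i]
      by_cases hij : j = i <;> simp [hij, Matrix.one_apply, Pi.single_apply, eq_comm]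
    rw [this]
    simp
  have hP0 : P ≠ 0 := fun h0 => h1 (by simp [h0])
  refine (Polynomial.finite_setOf_isRoot hP0).subset ?_
  intro t ht
  simp only [Set.mem_setOf_eq] at ht ⊢
  by_contra hroot
  apply ht
  have hdet : (Matrix.of fun j i => φ (a j + t • b j) i : Matrix (Fin m) (Fin m) 𝕜).det ≠ 0 := by
    rw [← hev]; exact hroot
  have hunit : IsUnit (Matrix.of fun j i => φ (a j + t • b j) i : Matrix (Fin m) (Fin m) 𝕜) :=
    (Matrix.isUnit_iff_isUnit_det _).mpr (isUnit_iff_ne_zero.mpr hdet)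
  have hrows := Matrix.linearIndependent_rows_iff_isUnit.mpr hunit
  have : LinearIndependent 𝕜 (fun j => φ (a j + t • b j)) := by
    convert hrows using 1
    rfl
  exact this.of_comp φ



section
variable {𝕜 : Type*} [RCLike 𝕜] {V : Type*} [NormedAddCommGroup V] [NormedSpace 𝕜 V]
  [FiniteDimensional 𝕜 V] {G : Type*} [Group G] (ρ : Representation 𝕜 G V) {k m : ℕ}

lemma aux_open (idx : Fin m → Fin k) (gg : Fin m → G) :
    IsOpen {v : Fin k → V | LinearIndependent 𝕜 (fun j => ρ (gg j) (v (idx j)))} := by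
  let L : (Fin k → V) →ₗ[𝕜] (Fin m → V) :=
    { toFun := fun v j => ρ (gg j) (v (idx j))
      map_add' := by intro x y; funext j; simp
      map_smul' := by intro c x; funext j; simp }
  have hL : Continuous L := L.continuous_of_finiteDimensional
  exact isOpen_setOf_linearIndependent.preimage hL

lemma aux_char (v : Fin k → V) :
    m ≤ finrank 𝕜 (Submodule.span 𝕜 (⋃ i : Fin k, Set.range fun g : G => ρ g (v i))) ↔
    ∃ idx : Fin m → Fin k, ∃ gg : Fin m → G,
      LinearIndependent 𝕜 (fun j => ρ (gg j) (v (idx j))) := by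
  classical
  set T : Set V := ⋃ i : Fin k, Set.range fun g : G => ρ g (v i) with hT
  constructor
  · intro hm
    obtain ⟨s, hsT, hspan, hind⟩ := exists_linearIndependent 𝕜 T
    have hsfin : s.Finite := hind.setFinite
    haveI := hsfin.fintype
    have hcard : finrank 𝕜 (span 𝕜 s) = s.toFinset.card := finrank_span_set_eq_card hind
    have hm' : m ≤ Fintype.card s := by
      rw [← Set.toFinset_card, ← hcard, hspan]; exact hm
    have : Nonempty (Fin m ↪ s) := by
      apply Function.Embedding.nonempty_iff_card_le.mpr
      simpa using hm'
    obtain ⟨e⟩ := this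
    have hind' : LinearIndependent 𝕜 (fun j : Fin m => ((e j : V))) :=
      hind.comp e e.injective
    have hmem : ∀ j : Fin m, ∃ i : Fin k, ∃ g : G, ((e j : V)) = ρ g (v i) := by
      intro j
      have := hsT (e j).2
      rw [hT] at this
      simp only [Set.mem_iUnion, Set.mem_range] at this
      obtain ⟨i, g, hg⟩ := this
      exact ⟨i, g, hg.symm⟩
    choose idx gg hgg using hmem
    refine ⟨idx, gg, ?_⟩
    convert hind' using 1
    funext j
    exact (hgg j).symm
  · rintro ⟨idx, gg, hind⟩
    have hsub : Set.range (fun j : Fin m => ρ (gg j) (v (idx j))) ⊆ T := by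
      rintro x ⟨j, rfl⟩
      rw [hT]
      exact Set.mem_iUnion.mpr ⟨idx j, Set.mem_range.mpr ⟨gg j, rfl⟩⟩
    calc m = finrank 𝕜 (span 𝕜 (Set.range fun j : Fin m => ρ (gg j) (v (idx j)))) := by
            rw [finrank_span_eq_card hind, Fintype.card_fin]
      _ ≤ finrank 𝕜 (span 𝕜 T) := Submodule.finrank_mono (span_mono hsub)

end



/-- If some `k`-tuple of points has orbits spanning a subspace of codimension `< r`,
then the set of `k`-tuples whose orbits span a subspace of codimension `< r`
contains an open dense subset of `V^k`. -/
theorem stmt_16 (𝕜 : Type*) [RCLike 𝕜] (V : Type*) [NormedAddCommGroup V]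
    [NormedSpace 𝕜 V] [FiniteDimensional 𝕜 V]
    (G : Type*) [Group G] [Finite G] (ρ : Representation 𝕜 G V)
    (k : ℕ) (r : ℕ) (hr : 1 ≤ r)
    (hex : ∃ v : Fin k → V,
      Module.finrank 𝕜 V - Module.finrank 𝕜
        (Submodule.span 𝕜 (⋃ i : Fin k, Set.range fun g : G => ρ g (v i))) < r) :
    ∃ U : Set (Fin k → V), IsOpen U ∧ Dense U ∧
      U ⊆ {v : Fin k → V |
        Module.finrank 𝕜 V - Module.finrank 𝕜
          (Submodule.span 𝕜 (⋃ i : Fin k, Set.range fun g : G => ρ g (v i))) < r} := by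
  classical
  obtain ⟨v₀, hv₀⟩ := hex
  set d := Module.finrank 𝕜 V with hd
  set m := d + 1 - r with hm
  set R : (Fin k → V) → ℕ := fun v =>
    Module.finrank 𝕜 (Submodule.span 𝕜 (⋃ i : Fin k, Set.range fun g : G => ρ g (v i)))
    with hR
  have hrank_le : ∀ v : Fin k → V, R v ≤ d := fun v => Submodule.finrank_le _
  have hiff : ∀ v : Fin k → V, (d - R v < r) ↔ m ≤ R v := by
    intro v; have := hrank_le v; omega
  set U : Set (Fin k → V) := {v | ∃ idx : Fin m → Fin k, ∃ gg : Fin m → G,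
    LinearIndependent 𝕜 (fun j => ρ (gg j) (v (idx j)))} with hU
  have hUchar : ∀ v, v ∈ U ↔ m ≤ R v := fun v => (aux_char ρ v).symm
  refine ⟨U, ?_, ?_, ?_⟩
  · have : U = ⋃ idx : Fin m → Fin k, ⋃ gg : Fin m → G,
        {v : Fin k → V | LinearIndependent 𝕜 (fun j => ρ (gg j) (v (idx j)))} := by
      ext v; simp [hU, Set.mem_iUnion]
    rw [this]
    exact isOpen_iUnion fun idx => isOpen_iUnion fun gg => aux_open ρ idx gg
  · rw [Metric.dense_iff]
    intro w ε hε
    have hv₀' : m ≤ R v₀ := (hiff v₀).mp hv₀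
    obtain ⟨idx, gg, hind⟩ := (aux_char ρ v₀).mp hv₀'
    set u : Fin k → V := v₀ - w with hu
    set a : Fin m → V := fun j => ρ (gg j) (w (idx j)) with ha
    set b : Fin m → V := fun j => ρ (gg j) (u (idx j)) with hb
    have hab : ∀ j, a j + b j = ρ (gg j) (v₀ (idx j)) := by
      intro j
      rw [ha, hb, ← map_add]
      congr 1
      simp [hu]
    have hind' : LinearIndependent 𝕜 (fun j => a j + b j) := by
      have : (fun j => a j + b j) = fun j => ρ (gg j) (v₀ (idx j)) := funext hab
      rw [this]; exact hind
    have hbad := aux_finite_bad hind'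
    set δ : ℝ := ε / (‖u‖ + 1) with hδ
    have hδ0 : 0 < δ := div_pos hε (by positivity)
    set f : ℕ → 𝕜 := fun n => (algebraMap ℝ 𝕜) (δ / (n + 2)) with hf
    have hfinj : Function.Injective f := by
      intro n n' hnn
      have h1 : δ / ((n : ℝ) + 2) = δ / ((n' : ℝ) + 2) :=
        (algebraMap ℝ 𝕜).injective hnn
      have h2 : δ * ((n' : ℝ) + 2) = δ * ((n : ℝ) + 2) :=
        (div_eq_div_iff (by positivity) (by positivity)).mp h1
      have h3 : ((n' : ℝ) + 2) = ((n : ℝ) + 2) :=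
        mul_left_cancel₀ (ne_of_gt hδ0) h2
      have : (n : ℝ) = (n' : ℝ) := by linarith
      exact_mod_cast this
    have hex_t : ∃ n, f n ∉ {t : 𝕜 | ¬ LinearIndependent 𝕜 (fun j => a j + t • b j)} := by
      by_contra hcon
      push_neg at hcon
      exact (Set.infinite_of_injective_forall_mem hfinj hcon) hbad
    obtain ⟨n, hn⟩ := hex_t
    simp only [Set.mem_setOf_eq, not_not] at hn
    set t : 𝕜 := f n with ht
    have htnorm : ‖t‖ < δ := by
      rw [ht, hf]
      rw [norm_algebraMap']
      rw [Real.norm_eq_abs, abs_of_pos (by positivity)]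
      rw [div_lt_iff₀ (by positivity)]
      nlinarith [hδ0]
    set p : Fin k → V := w + t • u with hp
    refine ⟨p, ?_, ?_⟩
    · rw [Metric.mem_ball, dist_eq_norm]
      have : p - w = t • u := by rw [hp]; abel
      rw [this, norm_smul]
      calc ‖t‖ * ‖u‖ ≤ ‖t‖ * (‖u‖ + 1) := by
            apply mul_le_mul_of_nonneg_left (by linarith) (norm_nonneg _)
        _ < δ * (‖u‖ + 1) := by
            apply mul_lt_mul_of_pos_right htnorm (by positivity)
        _ = ε := by rw [hδ]; field_simp
    · refine ⟨idx, gg, ?_⟩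
      have : (fun j => ρ (gg j) (p (idx j))) = fun j => a j + t • b j := by
        funext j
        rw [hp]
        simp only [Pi.add_apply, Pi.smul_apply, map_add, map_smul]
        rfl
      rw [this]
      exact hn
  · intro v hv
    exact (hiff v).mpr ((hUchar v).mp hv)
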